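/- Fix integers K ≥ 0 and 0 ≤ i ≤ K. For every family (τ_α)_{α∈(0,1)} of detection rules in the change-point model satisfying P(τ_α < Γ) ≤ α for all α ∈ (0,1), and for every ε > 0, there exists α₀ ∈ (0,1) such that P(τ_α = Γ + i) ≤ α^{1−ε} for all 0 < α < α₀. (This is the per-term claim Pr(τ = Γ + i) ≐ α, 0 ≤ i ≤ K, used to prove the final Appendix Corollary Pr(Γ ≤ τ ≤ Γ + K) ≐ α.) -/

import Mathlib

open MeasureTheory ProbabilityTheory Filter Set
open scoped ENNReal NNReal Real

noncomputable section

/-- The change-point probability measure `P = Σ_{k≥1} (1−ρ)^{k−1} ρ · (δ_k ⊗ ν_k)` on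
`ℕ × (ℕ → ℝ)`.  The first coordinate is the change point `Γ` (geometric with parameter `ρ`),
the second coordinate is the observation sequence `(x₁, x₂, …)`, encoded as a function
`ℕ → ℝ` whose `i`-th value (0-based) is the observation `X_{i+1}`. -/
def changePointMeasure (ρ : ℝ) (ν : ℕ → Measure (ℕ → ℝ)) : Measure (ℕ × (ℕ → ℝ)) :=
  Measure.sum fun k : ℕ =>
    (ENNReal.ofReal ((1 - ρ) ^ k * ρ)) • ((Measure.dirac (k + 1)).prod (ν (k + 1)))

/-- `ν k` is the countable product probability measure on sequences `(x₁, x₂, …) ∈ ℝ^ℕ`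
whose `i`-th factor (1-based) is `N(0,σ²)` for `i < k` and `N(A,σ²)` for `i ≥ k`:
each `ν k` is a probability measure whose finite-dimensional marginals are the
corresponding finite Gaussian product measures.  (With 0-based coordinates, the factor of
coordinate `i`, i.e. of observation `X_{i+1}`, is `N(0,σ²)` iff `i + 1 < k`.) -/
def IsChangePointFamily (σ A : ℝ) (ν : ℕ → Measure (ℕ → ℝ)) : Prop :=
  (∀ k, IsProbabilityMeasure (ν k)) ∧
    ∀ k n : ℕ,
      (ν k).map (fun x (i : Fin n) => x i) =
        Measure.pi fun i : Fin n =>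
          if (i : ℕ) + 1 < k then gaussianReal 0 ⟨σ ^ 2, sq_nonneg σ⟩
          else gaussianReal A ⟨σ ^ 2, sq_nonneg σ⟩

/-- A detection rule: a (possibly infinite valued) stopping time `τ` on observation
sequences such that for every `n ≥ 1` the event `{τ = n}` is measurable with respect to
the σ-algebra generated by the first `n` observations `X₁, …, X_n`. -/
def IsDetectionRule (τ : (ℕ → ℝ) → ℕ∞) : Prop :=
  ∀ n : ℕ, 1 ≤ n →
    MeasurableSet[MeasurableSpace.comap (fun x : ℕ → ℝ => fun i : Fin n => x i) inferInstance]
      {x | τ x = (n : ℕ∞)}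



lemma my_lintegral_pi_prod : ∀ (n : ℕ) (μ : Fin n → Measure ℝ), (∀ j, SigmaFinite (μ j)) →
    ∀ (f : Fin n → ℝ → ℝ≥0∞), (∀ j, Measurable (f j)) →
    ∫⁻ x, ∏ j, f j (x j) ∂Measure.pi μ = ∏ j, ∫⁻ t, f j t ∂μ j := by
  intro n
  induction n with
  | zero =>
    intro μ _ f _
    simp [Measure.pi_of_empty]
  | succ n ih =>
    intro μ hμ f hf
    haveI := hμ
    have hmp := measurePreserving_piFinSuccAbove μ 0
    have hg : Measurable (fun p : ℝ × (Fin n → ℝ) => f 0 p.1 * ∏ j : Fin n, f j.succ (p.2 j)) := by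
      refine ((hf 0).comp measurable_fst).mul ?_
      exact Finset.measurable_prod _ fun j _ =>
        (hf j.succ).comp ((measurable_pi_apply j).comp measurable_snd)
    calc ∫⁻ x, ∏ j, f j (x j) ∂Measure.pi μ
        = ∫⁻ x, (fun p : ℝ × (Fin n → ℝ) => f 0 p.1 * ∏ j : Fin n, f j.succ (p.2 j))
            ((MeasurableEquiv.piFinSuccAbove (fun _ => ℝ) 0) x) ∂Measure.pi μ := by
          refine lintegral_congr fun x => ?_
          simp [MeasurableEquiv.piFinSuccAbove, Fin.prod_univ_succ, Fin.succAbove_zero, Fin.tail]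
      _ = ∫⁻ p, f 0 p.1 * ∏ j : Fin n, f j.succ (p.2 j)
            ∂((μ 0).prod (Measure.pi fun j => μ ((0 : Fin (n+1)).succAbove j))) :=
          hmp.lintegral_comp hg
      _ = (∫⁻ t, f 0 t ∂μ 0) * ∏ j : Fin n, ∫⁻ t, f j.succ t ∂μ ((0 : Fin (n+1)).succAbove j) := by
          rw [lintegral_prod_mul (f := f 0) (g := fun y : Fin n → ℝ => ∏ j : Fin n, f j.succ (y j))
            ((hf 0).aemeasurable)
            ((Finset.measurable_prod _ fun j _ =>
              (hf j.succ).comp (measurable_pi_apply j)).aemeasurable)]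
          congr 1
          rw [ih _ (fun j => hμ _) _ (fun j => hf j.succ)]
      _ = ∏ j, ∫⁻ t, f j t ∂μ j := by
          simp [Fin.prod_univ_succ, Fin.succAbove_zero]

lemma my_pi_withDensity {n : ℕ} (μ κ : Fin n → Measure ℝ) (hμ : ∀ j, SigmaFinite (μ j))
    (hκs : ∀ j, SigmaFinite (κ j))
    (f : Fin n → ℝ → ℝ≥0∞) (hf : ∀ j, Measurable (f j))
    (hκ : ∀ j, κ j = (μ j).withDensity (f j)) :
    Measure.pi κ = (Measure.pi μ).withDensity fun x => ∏ j, f j (x j) := by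
  haveI := hμ; haveI := hκs
  refine Measure.pi_eq fun s hs => ?_
  rw [withDensity_apply _ (MeasurableSet.univ_pi hs),
    ← lintegral_indicator (MeasurableSet.univ_pi hs) _]
  have hind : (Set.univ.pi s).indicator (fun x => ∏ j, f j (x j))
      = fun x => ∏ j, (s j).indicator (f j) (x j) := by
    ext x
    by_cases hx : x ∈ Set.univ.pi s
    · rw [Set.indicator_of_mem hx]
      exact Finset.prod_congr rfl fun j _ => (Set.indicator_of_mem (hx j (Set.mem_univ j)) _).symm
    · rw [Set.indicator_of_notMem hx]
      rw [Set.mem_univ_pi] at hx; push_neg at hx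
      obtain ⟨j, hj⟩ := hx
      exact (Finset.prod_eq_zero (Finset.mem_univ j) (Set.indicator_of_notMem hj _)).symm
  rw [hind, my_lintegral_pi_prod n μ hμ _ (fun j => (hf j).indicator (hs j))]
  refine Finset.prod_congr rfl fun j _ => ?_
  rw [hκ j, withDensity_apply _ (hs j), ← lintegral_indicator (hs j) _]

/-- the likelihood ratio dN(A,σ²)/dN(0,σ²) -/
def myLR (σ A : ℝ) (x : ℝ) : ℝ≥0∞ := ENNReal.ofReal (Real.exp ((2*A*x - A^2) / (2*σ^2)))

lemma myLR_meas {σ A : ℝ} : Measurable (myLR σ A) := by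
  unfold myLR
  exact (((measurable_const.mul measurable_id).sub measurable_const).div_const _).exp.ennreal_ofReal

lemma my_v_ne_zero {σ : ℝ} (hσ : 0 < σ) : (⟨σ ^ 2, sq_nonneg σ⟩ : ℝ≥0) ≠ 0 := by
  intro h
  have h : σ ^ 2 = 0 := congrArg Subtype.val h
  nlinarith

instance my_gauss_prob (m σ : ℝ) : IsProbabilityMeasure (gaussianReal m ⟨σ ^ 2, sq_nonneg σ⟩) :=
  instIsProbabilityMeasureGaussianReal m _

lemma my_gaussian_density {σ A : ℝ} (hσ : 0 < σ) :
    gaussianReal A ⟨σ ^ 2, sq_nonneg σ⟩ =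
      (gaussianReal 0 ⟨σ ^ 2, sq_nonneg σ⟩).withDensity (myLR σ A) := by
  have hv := my_v_ne_zero hσ
  obtain ⟨v, hvdef⟩ : ∃ v : ℝ≥0, v = ⟨σ ^ 2, sq_nonneg σ⟩ := ⟨_, rfl⟩
  have hvv : (v : ℝ) = σ ^ 2 := by rw [hvdef]; rfl
  rw [← hvdef] at hv ⊢
  rw [gaussianReal_of_var_ne_zero _ hv, gaussianReal_of_var_ne_zero _ hv,
    ← withDensity_mul _ (measurable_gaussianPDF 0 _) myLR_meas]
  congr 1
  ext x
  rw [Pi.mul_apply, gaussianPDF, gaussianPDF, myLR,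
    ← ENNReal.ofReal_mul (gaussianPDFReal_nonneg _ _ _)]
  congr 1
  rw [gaussianPDFReal, gaussianPDFReal, mul_assoc _ (rexp _) (rexp _), ← Real.exp_add]
  congr 2
  rw [hvv]
  have hσ2 : σ ^ 2 ≠ 0 := by positivity
  field_simp
  ring

lemma my_gaussian_exp_moment {σ : ℝ} (hσ : 0 < σ) (c d : ℝ) :
    ∫⁻ x, ENNReal.ofReal (Real.exp (c * x + d)) ∂(gaussianReal 0 ⟨σ ^ 2, sq_nonneg σ⟩)
      = ENNReal.ofReal (Real.exp (c^2 * σ^2 / 2 + d)) := by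
  have hv := my_v_ne_zero hσ
  obtain ⟨v, hvdef⟩ : ∃ v : ℝ≥0, v = ⟨σ ^ 2, sq_nonneg σ⟩ := ⟨_, rfl⟩
  have hvv : (v : ℝ) = σ ^ 2 := by rw [hvdef]; rfl
  rw [← hvdef] at hv ⊢
  rw [gaussianReal_of_var_ne_zero _ hv,
    lintegral_withDensity_eq_lintegral_mul _ (measurable_gaussianPDF 0 _)
      (by fun_prop : Measurable fun x : ℝ => ENNReal.ofReal (Real.exp (c * x + d)))]
  have hpt : ∀ x : ℝ, (gaussianPDF 0 v
        * fun x => ENNReal.ofReal (Real.exp (c * x + d))) x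
      = ENNReal.ofReal (Real.exp (c^2 * σ^2 / 2 + d))
        * gaussianPDF (c * σ^2) v x := by
    intro x
    rw [Pi.mul_apply, gaussianPDF, gaussianPDF,
      ← ENNReal.ofReal_mul (gaussianPDFReal_nonneg _ _ _),
      ← ENNReal.ofReal_mul (Real.exp_nonneg _)]
    congr 1
    rw [gaussianPDFReal, gaussianPDFReal]
    rw [hvv]
    rw [mul_assoc _ (rexp _) (rexp _), ← Real.exp_add, ← mul_assoc,
      mul_comm (rexp (c ^ 2 * σ ^ 2 / 2 + d)), mul_assoc _ (rexp _) (rexp _), ← Real.exp_add]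
    congr 2
    have hσ2 : σ ^ 2 ≠ 0 := by positivity
    field_simp
    ring
  simp only [hpt]
  rw [lintegral_const_mul _ (measurable_gaussianPDF _ _)]
  have h1 : ∫⁻ x, gaussianPDF (c * σ^2) v x = 1 :=
    lintegral_gaussianPDFReal_eq_one (c * σ^2) hv
  rw [h1, mul_one]

lemma my_holder {α : Type*} [MeasurableSpace α] (m : Measure α) {p q : ℝ}
    (hpq : Real.HolderConjugate p q) {F : α → ℝ≥0∞} (hF : Measurable F)
    {B : Set α} (hB : MeasurableSet B) :
    m.withDensity F B ≤ (∫⁻ x, F x ^ p ∂m) ^ (1/p) * (m B) ^ (1/q) := by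
  rw [withDensity_apply _ hB, ← lintegral_indicator hB]
  have h1 : ∀ x, B.indicator F x = (F * B.indicator (1 : α → ℝ≥0∞)) x := by
    intro x; by_cases hx : x ∈ B <;> simp [hx]
  calc ∫⁻ x, B.indicator F x ∂m
      = ∫⁻ x, (F * B.indicator (1 : α → ℝ≥0∞)) x ∂m := lintegral_congr h1
    _ ≤ (∫⁻ x, F x ^ p ∂m) ^ (1/p) * (∫⁻ x, (B.indicator (1 : α → ℝ≥0∞) x) ^ q ∂m) ^ (1/q) :=
        ENNReal.lintegral_mul_le_Lp_mul_Lq m hpq hF.aemeasurable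
          ((measurable_one.indicator hB).aemeasurable)
    _ = (∫⁻ x, F x ^ p ∂m) ^ (1/p) * (m B) ^ (1/q) := by
        congr 2
        have h2 : ∀ x, (B.indicator (1 : α → ℝ≥0∞) x) ^ q = B.indicator 1 x := by
          intro x
          by_cases hx : x ∈ B <;> simp [hx, ENNReal.zero_rpow_of_pos hpq.symm.pos]
        rw [lintegral_congr h2, lintegral_indicator_one hB]

lemma my_prod_ite (D : ℝ≥0∞) (k i : ℕ) :
    (∏ j : Fin (k+1+i), if (j:ℕ)+1 < k+1 then (1:ℝ≥0∞) else D) = D ^ (i+1) := by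
  rw [Fin.prod_univ_eq_prod_range (fun j => if j+1 < k+1 then (1:ℝ≥0∞) else D) (k+1+i),
    ← Finset.prod_filter_mul_prod_filter_not (Finset.range (k+1+i)) (fun j => j+1 < k+1)]
  have h1 : (∏ j ∈ (Finset.range (k+1+i)).filter (fun j => j+1 < k+1),
      (if j+1 < k+1 then (1:ℝ≥0∞) else D)) = 1 :=
    Finset.prod_eq_one fun j hj => if_pos (Finset.mem_filter.1 hj).2
  have h2 : (Finset.range (k+1+i)).filter (fun j => ¬ (j+1 < k+1)) = Finset.Ico k (k+1+i) := by
    ext j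
    simp only [Finset.mem_filter, Finset.mem_range, Finset.mem_Ico]
    omega
  rw [h1, one_mul, h2]
  have h3 : (∏ j ∈ Finset.Ico k (k+1+i), (if j+1 < k+1 then (1:ℝ≥0∞) else D))
      = ∏ _j ∈ Finset.Ico k (k+1+i), D :=
    Finset.prod_congr rfl fun j hj => if_neg (by have := (Finset.mem_Ico.1 hj).1; omega)
  rw [h3, Finset.prod_const, Nat.card_Ico]
  congr 1
  omega

lemma my_prod_rpow {ι : Type*} (s : Finset ι) (g : ι → ℝ≥0∞) {p : ℝ} (hp : 0 ≤ p) :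
    (∏ j ∈ s, g j) ^ p = ∏ j ∈ s, (g j) ^ p := by
  induction s using Finset.cons_induction with
  | empty => simp [ENNReal.one_rpow]
  | cons a s ha ih =>
    rw [Finset.prod_cons, Finset.prod_cons, ENNReal.mul_rpow_of_nonneg _ _ hp, ih]

/-- fix `K ≥ 0` and `0 ≤ i ≤ K`.  For any family of detection rules with
false-alarm probability at most `α`, the probability of a delay of exactly `i` steps decays
essentially like `α`: for every `ε > 0` there is `α₀ ∈ (0,1)` with
`P(τ_α = Γ + i) ≤ α^{1−ε}` for all `0 < α < α₀`. -/
theorem detection_delay_exactly_i_prob_le_rpow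
    (σ A ρ : ℝ) (hσ : 0 < σ) (hA : 0 < A) (hρ : ρ ∈ Set.Ioo (0 : ℝ) 1)
    (ν : ℕ → Measure (ℕ → ℝ)) (hν : IsChangePointFamily σ A ν)
    (K i : ℕ) (hiK : i ≤ K)
    (τ : ℝ → (ℕ → ℝ) → ℕ∞)
    (hτ : ∀ α ∈ Set.Ioo (0 : ℝ) 1, IsDetectionRule (τ α))
    (hFA : ∀ α ∈ Set.Ioo (0 : ℝ) 1,
      changePointMeasure ρ ν {ω | τ α ω.2 < (ω.1 : ℕ∞)} ≤ ENNReal.ofReal α) :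
    ∀ ε > (0 : ℝ), ∃ α₀ ∈ Set.Ioo (0 : ℝ) 1, ∀ α : ℝ, 0 < α → α < α₀ →
      changePointMeasure ρ ν {ω | τ α ω.2 = ((ω.1 + i : ℕ) : ℕ∞)}
        ≤ ENNReal.ofReal (α ^ (1 - ε)) := by
  intro ε hε
  obtain ⟨hρ0, hρ1⟩ := hρ
  obtain ⟨hprob, hmarg⟩ := hν
  set r : ℝ := 1 - ρ with hrdef
  have hr0 : 0 < r := by simp only [hrdef]; linarith
  have hr1 : r < 1 := by simp only [hrdef]; linarith
  -- exponents
  set e : ℝ := min ε (1/2) with hedef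
  have he0 : 0 < e := lt_min hε (by norm_num)
  have he2 : e ≤ 1/2 := min_le_right _ _
  have heε : e ≤ ε := min_le_left _ _
  have ht0 : 0 < e/2 := by linarith
  have hpq : ((1:ℝ)/(e/2)).HolderConjugate (1/(1 - e/2)) :=
    Real.holderConjugate_one_div ht0 (by linarith) (by ring)
  set p : ℝ := 1/(e/2) with hpdef
  set q : ℝ := 1/(1 - e/2) with hqdef
  have hqinv : 1/q = 1 - e/2 := by rw [hqdef, one_div_one_div]
  have hpinv : 1/p = e/2 := by rw [hpdef, one_div_one_div]
  have hp_pos : 0 < p := hpq.pos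
  -- constants
  set DR : ℝ := Real.exp ((p*A/σ^2)^2 * σ^2 / 2 + (-(p*A^2) / (2*σ^2))) with hDRdef
  have hDRpos : 0 < DR := Real.exp_pos _
  set CR : ℝ := (DR^(i+1)) ^ (1/p) with hCRdef
  have hCRpos : 0 < CR := Real.rpow_pos_of_pos (pow_pos hDRpos _) _
  set s : ℝ := r ^ (e/2) with hsdef
  have hs0 : 0 ≤ s := Real.rpow_nonneg hr0.le _
  have hs1 : s < 1 := Real.rpow_lt_one hr0.le hr1 ht0
  set C0 : ℝ := ρ * CR * (1/(r^(1+i) * ρ)) ^ (1 - e/2) * (1-s)⁻¹ with hC0def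
  have hw1i : 0 < r^(1+i) * ρ := by positivity
  have hC0pos : 0 < C0 := by
    have h1 : (0:ℝ) < (1/(r^(1+i) * ρ)) ^ (1 - e/2) :=
      Real.rpow_pos_of_pos (by positivity) _
    have h2 : (0:ℝ) < (1-s)⁻¹ := by
      rw [inv_pos]; linarith
    positivity
  set δ : ℝ := ε - e/2 with hδdef
  have hδ0 : 0 < δ := by simp only [hδdef]; linarith
  refine ⟨min (1/2) ((C0⁻¹) ^ (1/δ)), ⟨lt_min (by norm_num)
    (Real.rpow_pos_of_pos (inv_pos.2 hC0pos) _), lt_of_le_of_lt (min_le_left _ _) (by norm_num)⟩,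
    ?_⟩
  intro α hα0 hα1
  have hα12 : α < 1/2 := lt_of_lt_of_le hα1 (min_le_left _ _)
  have hαlt1 : α < 1 := by linarith
  have hαIoo : α ∈ Set.Ioo (0:ℝ) 1 := ⟨hα0, hαlt1⟩
  have hπmeas : ∀ n : ℕ, Measurable (fun x : ℕ → ℝ => fun j : Fin n => x j) :=
    fun n => measurable_pi_lambda _ fun j => measurable_pi_apply _
  have hEm : ∀ n : ℕ, 1 ≤ n → MeasurableSet {x : ℕ → ℝ | τ α x = (n : ℕ∞)} := by
    intro n hn
    obtain ⟨B, hB, hBeq⟩ := MeasurableSpace.measurableSet_comap.mp (hτ α hαIoo n hn)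
    rw [← hBeq]; exact hπmeas n hB
  -- the key per-k bound
  have hkey : ∀ k : ℕ, ν (k+1) {x : ℕ → ℝ | τ α x = ((k+1+i : ℕ) : ℕ∞)}
      ≤ ENNReal.ofReal (CR * (α / (r^(k+1+i) * ρ)) ^ (1 - e/2)) := by
    intro k
    obtain ⟨B, hB, hBeq⟩ := MeasurableSpace.measurableSet_comap.mp
      (hτ α hαIoo (k+1+i) (by omega))
    have hmap : ∀ m : ℕ, ν m {x : ℕ → ℝ | τ α x = ((k+1+i : ℕ) : ℕ∞)}
        = (Measure.pi fun j : Fin (k+1+i) =>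
            if (j : ℕ) + 1 < m then gaussianReal 0 ⟨σ ^ 2, sq_nonneg σ⟩
            else gaussianReal A ⟨σ ^ 2, sq_nonneg σ⟩) B := by
      intro m
      haveI := hprob m
      rw [← hBeq, ← Measure.map_apply (hπmeas (k+1+i)) hB, hmarg m (k+1+i)]
    -- false alarm bound for the measure with change point at k+i+2
    have hwn : (0:ℝ) < r^(k+1+i) * ρ := by positivity
    have hterm : ENNReal.ofReal (r^(k+1+i) * ρ)
        * ν (k+1+i+1) {x : ℕ → ℝ | τ α x = ((k+1+i : ℕ) : ℕ∞)} ≤ ENNReal.ofReal α := by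
      haveI := hprob (k+1+i+1)
      have hsub : ({(k+1+i+1)} : Set ℕ) ×ˢ {x : ℕ → ℝ | τ α x = ((k+1+i : ℕ) : ℕ∞)}
          ⊆ {ω : ℕ × (ℕ → ℝ) | τ α ω.2 < (ω.1 : ℕ∞)} := by
        rintro ⟨a, x⟩ ⟨ha, hx⟩
        simp only [Set.mem_singleton_iff] at ha
        simp only [Set.mem_setOf_eq] at hx ⊢
        subst ha
        rw [hx]
        exact_mod_cast lt_add_one (k+1+i)
      calc ENNReal.ofReal (r^(k+1+i) * ρ)
          * ν (k+1+i+1) {x : ℕ → ℝ | τ α x = ((k+1+i : ℕ) : ℕ∞)}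
          = (ENNReal.ofReal (r ^ (k+1+i) * ρ)
              • ((Measure.dirac (k+1+i+1)).prod (ν (k+1+i+1))))
              (({(k+1+i+1)} : Set ℕ) ×ˢ {x : ℕ → ℝ | τ α x = ((k+1+i : ℕ) : ℕ∞)}) := by
            rw [Measure.smul_apply, Measure.prod_prod,
              Measure.dirac_apply_of_mem (Set.mem_singleton _), one_mul, smul_eq_mul]
        _ ≤ changePointMeasure ρ ν {ω : ℕ × (ℕ → ℝ) | τ α ω.2 < (ω.1 : ℕ∞)} := by
            rw [changePointMeasure]
            exact le_trans (measure_mono hsub)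
              (Measure.le_iff'.1 (Measure.le_sum _ (k+1+i)) _)
        _ ≤ ENNReal.ofReal α := hFA α hαIoo
    have hb2 : ν (k+1+i+1) {x : ℕ → ℝ | τ α x = ((k+1+i : ℕ) : ℕ∞)}
        ≤ ENNReal.ofReal (α / (r^(k+1+i) * ρ)) := by
      rw [ENNReal.ofReal_div_of_pos hwn]
      refine (ENNReal.le_div_iff_mul_le (Or.inl (ENNReal.ofReal_pos.2 hwn).ne')
        (Or.inl ENNReal.ofReal_ne_top)).2 ?_
      rw [mul_comm]
      exact hterm
    -- the densities
    set fj : Fin (k+1+i) → ℝ → ℝ≥0∞ :=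
      fun j t => if (j : ℕ) + 1 < k+1 then (1:ℝ≥0∞) else myLR σ A t with hfjdef
    have hfjmeas : ∀ j, Measurable (fj j) := by
      intro j
      simp only [hfjdef]
      split
      · exact measurable_const
      · exact myLR_meas
    have hκeq : ∀ j : Fin (k+1+i),
        (if (j : ℕ) + 1 < k+1 then gaussianReal 0 ⟨σ ^ 2, sq_nonneg σ⟩
          else gaussianReal A ⟨σ ^ 2, sq_nonneg σ⟩)
        = (gaussianReal 0 ⟨σ ^ 2, sq_nonneg σ⟩).withDensity (fj j) := by
      intro j
      simp only [hfjdef]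
      split
      · simp [withDensity_one]
      · exact my_gaussian_density hσ
    have hfam : (Measure.pi fun j : Fin (k+1+i) =>
          if (j : ℕ) + 1 < k+1 then gaussianReal 0 ⟨σ ^ 2, sq_nonneg σ⟩
          else gaussianReal A ⟨σ ^ 2, sq_nonneg σ⟩)
        = (Measure.pi fun _ : Fin (k+1+i) => gaussianReal 0 ⟨σ ^ 2, sq_nonneg σ⟩).withDensity
            (fun x => ∏ j, fj j (x j)) := by
      refine my_pi_withDensity _ _ (fun j => inferInstance) (fun j => ?_) fj hfjmeas hκeq
      split
      · infer_instance
      · infer_instance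
    have hFmeas : Measurable (fun x : Fin (k+1+i) → ℝ => ∏ j, fj j (x j)) :=
      Finset.measurable_prod _ fun j _ => (hfjmeas j).comp (measurable_pi_apply j)
    -- the L^p norm of the density
    have hFp : ∫⁻ x, (∏ j, fj j (x j)) ^ p
          ∂(Measure.pi fun _ : Fin (k+1+i) => gaussianReal 0 ⟨σ ^ 2, sq_nonneg σ⟩)
        = ENNReal.ofReal DR ^ (i+1) := by
      have hpe : ∀ x : Fin (k+1+i) → ℝ,
          (∏ j, fj j (x j)) ^ p = ∏ j, (fun t => fj j t ^ p) (x j) := by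
        intro x
        exact my_prod_rpow _ _ hp_pos.le
      rw [lintegral_congr hpe,
        my_lintegral_pi_prod _ _ (fun j => inferInstance) _
          (fun j => (hfjmeas j).pow_const p)]
      have hfactor : ∀ j : Fin (k+1+i), (∫⁻ t, fj j t ^ p
            ∂(gaussianReal 0 ⟨σ ^ 2, sq_nonneg σ⟩))
          = if (j : ℕ) + 1 < k+1 then (1:ℝ≥0∞) else ENNReal.ofReal DR := by
        intro j
        simp only [hfjdef]
        split
        · simp
        · have hLRp : ∀ t : ℝ, (myLR σ A t) ^ p
              = ENNReal.ofReal (Real.exp ((p*A/σ^2) * t + (-(p*A^2)/(2*σ^2)))) := by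
            intro t
            rw [myLR, ENNReal.ofReal_rpow_of_pos (Real.exp_pos _)]
            congr 1
            rw [Real.rpow_def_of_pos (Real.exp_pos _), Real.log_exp]
            congr 1
            have hσ2 : σ ^ 2 ≠ 0 := by positivity
            field_simp
            ring
          rw [lintegral_congr hLRp, my_gaussian_exp_moment hσ]
      rw [Finset.prod_congr rfl (fun j _ => hfactor j), my_prod_ite]
    -- put it together
    calc ν (k+1) {x : ℕ → ℝ | τ α x = ((k+1+i : ℕ) : ℕ∞)}
        = (Measure.pi fun j : Fin (k+1+i) =>
            if (j : ℕ) + 1 < k+1 then gaussianReal 0 ⟨σ ^ 2, sq_nonneg σ⟩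
            else gaussianReal A ⟨σ ^ 2, sq_nonneg σ⟩) B := hmap (k+1)
      _ ≤ (∫⁻ x, (∏ j, fj j (x j)) ^ p
            ∂(Measure.pi fun _ : Fin (k+1+i) => gaussianReal 0 ⟨σ ^ 2, sq_nonneg σ⟩)) ^ (1/p)
          * ((Measure.pi fun _ : Fin (k+1+i) => gaussianReal 0 ⟨σ ^ 2, sq_nonneg σ⟩) B) ^ (1/q) := by
          rw [hfam]
          exact my_holder _ hpq hFmeas hB
      _ ≤ ENNReal.ofReal (CR * (α / (r^(k+1+i) * ρ)) ^ (1 - e/2)) := by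
          rw [hFp]
          have hpiB : (Measure.pi fun _ : Fin (k+1+i) => gaussianReal 0 ⟨σ ^ 2, sq_nonneg σ⟩) B
              = ν (k+1+i+1) {x : ℕ → ℝ | τ α x = ((k+1+i : ℕ) : ℕ∞)} := by
            rw [hmap (k+1+i+1)]
            refine congrFun (congrArg _ (congrArg Measure.pi (funext fun j => ?_))) B
            exact (if_pos (by have := j.isLt; omega)).symm
          rw [hpiB]
          have h1 : (ENNReal.ofReal DR ^ (i + 1)) ^ (1/p) = ENNReal.ofReal CR := by
            rw [← ENNReal.ofReal_pow hDRpos.le, ENNReal.ofReal_rpow_of_pos (pow_pos hDRpos _),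
              hCRdef]
          have h2 : (ν (k+1+i+1) {x : ℕ → ℝ | τ α x = ((k+1+i : ℕ) : ℕ∞)}) ^ (1/q)
              ≤ ENNReal.ofReal ((α / (r^(k+1+i) * ρ)) ^ (1 - e/2)) := by
            rw [← hqinv]
            refine le_trans (ENNReal.rpow_le_rpow hb2 (by rw [hqinv]; linarith)) ?_
            rw [ENNReal.ofReal_rpow_of_pos (by positivity)]
          rw [h1, ENNReal.ofReal_mul hCRpos.le]
          exact mul_le_mul_right h2 _
    -- end hkey
  -- sum over k
  have hS : changePointMeasure ρ ν {ω : ℕ × (ℕ → ℝ) | τ α ω.2 = ((ω.1 + i : ℕ) : ℕ∞)}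
      ≤ ∑' k : ℕ, ENNReal.ofReal (r^k * ρ)
          * ν (k+1) {x : ℕ → ℝ | τ α x = ((k+1+i : ℕ) : ℕ∞)} := by
    set T : Set (ℕ × (ℕ → ℝ)) :=
      ⋃ m : ℕ, ({m+1} : Set ℕ) ×ˢ {x : ℕ → ℝ | τ α x = ((m+1+i : ℕ) : ℕ∞)} with hTdef
    have hTmeas : MeasurableSet T :=
      MeasurableSet.iUnion fun m => (measurableSet_singleton _).prod (hEm (m+1+i) (by omega))
    have hZmeas : MeasurableSet (({0} : Set ℕ) ×ˢ (univ : Set (ℕ → ℝ))) :=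
      (measurableSet_singleton _).prod MeasurableSet.univ
    have hsub : {ω : ℕ × (ℕ → ℝ) | τ α ω.2 = ((ω.1 + i : ℕ) : ℕ∞)}
        ⊆ (({0} : Set ℕ) ×ˢ (univ : Set (ℕ → ℝ))) ∪ T := by
      rintro ⟨a, x⟩ hx
      simp only [Set.mem_setOf_eq] at hx
      rcases Nat.eq_zero_or_pos a with h0 | hpos
      · left
        exact ⟨by simp [h0], trivial⟩
      · right
        obtain ⟨m, rfl⟩ : ∃ m, a = m + 1 := ⟨a - 1, by omega⟩
        exact Set.mem_iUnion.2 ⟨m, Set.mem_singleton _, by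
          simpa [Set.mem_setOf_eq, Nat.add_comm, Nat.add_assoc, Nat.add_left_comm] using hx⟩
    refine le_trans (measure_mono hsub) (le_trans (measure_union_le _ _) ?_)
    have hZ0 : changePointMeasure ρ ν (({0} : Set ℕ) ×ˢ (univ : Set (ℕ → ℝ))) = 0 := by
      rw [changePointMeasure, Measure.sum_apply _ hZmeas]
      refine ENNReal.tsum_eq_zero.2 fun k => ?_
      haveI := hprob (k+1)
      rw [Measure.smul_apply, Measure.prod_prod,
        Measure.dirac_apply' _ (measurableSet_singleton 0)]
      simp
    rw [hZ0, zero_add, changePointMeasure, Measure.sum_apply _ hTmeas]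
    refine ENNReal.tsum_le_tsum fun k => ?_
    haveI := hprob (k+1)
    rw [Measure.smul_apply, Measure.dirac_prod, smul_eq_mul,
      Measure.map_apply measurable_prodMk_left hTmeas]
    have hpre : (Prod.mk (k+1) ⁻¹' T) = {x : ℕ → ℝ | τ α x = ((k+1+i : ℕ) : ℕ∞)} := by
      ext x
      simp only [hTdef, Set.mem_preimage, Set.mem_iUnion, Set.mem_prod, Set.mem_singleton_iff,
        Set.mem_setOf_eq]
      constructor
      · rintro ⟨m, hm, hx⟩
        obtain rfl : m = k := by omega
        exact hx
      · intro hx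
        exact ⟨k, rfl, hx⟩
    rw [hpre]
  refine le_trans hS ?_
  -- bound each term and sum the geometric series
  have hbound : ∀ k : ℕ, ENNReal.ofReal (r^k * ρ)
        * ν (k+1) {x : ℕ → ℝ | τ α x = ((k+1+i : ℕ) : ℕ∞)}
      ≤ ENNReal.ofReal ((r^k * ρ) * (CR * (α / (r^(k+1+i) * ρ)) ^ (1 - e/2))) := by
    intro k
    exact le_trans (mul_le_mul_right (hkey k) _)
      (le_of_eq (ENNReal.ofReal_mul (by positivity)).symm)
  refine le_trans (ENNReal.tsum_le_tsum hbound) ?_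
  -- real computation
  set C1 : ℝ := ρ * CR * (α / (r^(1+i) * ρ)) ^ (1 - e/2) with hC1def
  have hC1pos : 0 < C1 := by
    have : (0:ℝ) < (α / (r^(1+i) * ρ)) ^ (1 - e/2) := Real.rpow_pos_of_pos (by positivity) _
    positivity
  have ha : ∀ k : ℕ, (r^k * ρ) * (CR * (α / (r^(k+1+i) * ρ)) ^ (1 - e/2)) = C1 * s^k := by
    intro k
    have h1 : α / (r^(k+1+i) * ρ) = (α / (r^(1+i) * ρ)) * ((r:ℝ)^k)⁻¹ := by
      rw [pow_add]
      field_simp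
      try ring
      try tauto
    have h2 : ((α / (r^(1+i) * ρ)) * ((r:ℝ)^k)⁻¹) ^ (1 - e/2)
        = (α / (r^(1+i) * ρ)) ^ (1 - e/2) * (((r:ℝ)^k)⁻¹) ^ (1 - e/2) :=
      Real.mul_rpow (by positivity) (by positivity)
    have h3 : (r:ℝ)^k * (((r:ℝ)^k)⁻¹) ^ (1 - e/2) = s^k := by
      rw [← Real.rpow_natCast r k, ← Real.rpow_neg_one (r ^ (k:ℝ)),
        ← Real.rpow_natCast (r ^ (e/2)) k]
      rw [← Real.rpow_mul hr0.le, ← Real.rpow_mul hr0.le, ← Real.rpow_mul hr0.le,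
        ← Real.rpow_add hr0]
      congr 1
      ring
    rw [h1, h2, hC1def]
    calc r ^ k * ρ * (CR * ((α / (r ^ (1 + i) * ρ)) ^ (1 - e/2) * ((r:ℝ)^k)⁻¹ ^ (1 - e/2)))
        = ρ * CR * (α / (r^(1+i) * ρ)) ^ (1 - e/2) * (r ^ k * ((r:ℝ)^k)⁻¹ ^ (1 - e/2)) := by ring
      _ = ρ * CR * (α / (r^(1+i) * ρ)) ^ (1 - e/2) * s ^ k := by rw [h3]
  have hsummable : Summable fun k : ℕ => C1 * s^k :=
    (summable_geometric_of_lt_one hs0 hs1).mul_left C1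
  have htsum : (∑' k : ℕ, ENNReal.ofReal ((r^k * ρ)
        * (CR * (α / (r^(k+1+i) * ρ)) ^ (1 - e/2))))
      = ENNReal.ofReal (C1 * (1 - s)⁻¹) := by
    have := ENNReal.ofReal_tsum_of_nonneg (f := fun k : ℕ => C1 * s^k)
      (fun k => by positivity) hsummable
    rw [tsum_congr (fun k => congrArg ENNReal.ofReal (ha k)), ← this,
      tsum_mul_left, tsum_geometric_of_lt_one hs0 hs1]
  rw [htsum]
  refine ENNReal.ofReal_le_ofReal ?_
  -- final real inequality : C1 * (1-s)⁻¹ ≤ α ^ (1-ε)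
  have hsplit : (α / (r^(1+i) * ρ)) ^ (1 - e/2)
      = α ^ (1 - e/2) * (1/(r^(1+i) * ρ)) ^ (1 - e/2) := by
    rw [div_eq_mul_one_div, Real.mul_rpow hα0.le (by positivity)]
  have hαsplit : α ^ (1 - e/2) = α ^ (1-ε) * α ^ δ := by
    rw [← Real.rpow_add hα0]
    congr 1
    simp only [hδdef]
    ring
  have hαδ : C0 * α ^ δ ≤ 1 := by
    have hαle : α ≤ (C0⁻¹) ^ (1/δ) := le_of_lt (lt_of_lt_of_le hα1 (min_le_right _ _))
    have h4 : α ^ δ ≤ ((C0⁻¹) ^ (1/δ)) ^ δ := Real.rpow_le_rpow hα0.le hαle hδ0.le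
    have h5 : ((C0⁻¹ : ℝ) ^ (1/δ)) ^ δ = C0⁻¹ := by
      rw [← Real.rpow_mul (inv_pos.2 hC0pos).le, one_div_mul_cancel hδ0.ne', Real.rpow_one]
    calc C0 * α ^ δ ≤ C0 * C0⁻¹ := by
          refine mul_le_mul_of_nonneg_left ?_ hC0pos.le
          rw [← h5]; exact h4
      _ = 1 := mul_inv_cancel₀ hC0pos.ne'
  calc C1 * (1-s)⁻¹
      = (α ^ (1-ε)) * (C0 * α ^ δ) := by
        rw [hC1def, hsplit, hαsplit, hC0def]
        ring
    _ ≤ (α ^ (1-ε)) * 1 := by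
        refine mul_le_mul_of_nonneg_left hαδ (Real.rpow_nonneg hα0.le _)
    _ = α ^ (1-ε) := mul_one _

end
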